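/- For any fixed n ∈ ℕ, n ≥ 1, and non-negative independent random variables X and Y, the inequality P(X + Y > x) ≤ Σ_{i=0}^{n-1} P(X ≥ ix/n) · P(Y ≥ (n-i-1)x/n) holds for all x ≥ 0. -/
import Mathlib


open MeasureTheory ProbabilityTheory

theorem sum_tail_bound {Ω : Type*} [MeasurableSpace Ω] (μ : Measure Ω)
    [IsProbabilityMeasure μ] (X Y : Ω → ℝ) (hX : Measurable X) (hY : Measurable Y)
    (hX0 : ∀ ω, 0 ≤ X ω) (hY0 : ∀ ω, 0 ≤ Y ω)
    (hindep : IndepFun X Y μ) (n : ℕ) (hn : 1 ≤ n) (x : ℝ) (hx : 0 ≤ x) :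
    μ {ω | x < X ω + Y ω} ≤
      ∑ i ∈ Finset.range n,
        μ {ω | (i : ℝ) * x / n ≤ X ω} * μ {ω | ((n - i - 1 : ℕ) : ℝ) * x / n ≤ Y ω} := by
  have hn' : (0:ℝ) < n := by exact_mod_cast hn
  set A : ℕ → Set Ω := fun i =>
    X ⁻¹' Set.Ici ((i:ℝ) * x / n) ∩ Y ⁻¹' Set.Ici (((n - i - 1 : ℕ) : ℝ) * x / n) with hA
  have hsub : {ω | x < X ω + Y ω} ⊆ ⋃ i ∈ Finset.range n, A i := by
    intro ω hω
    simp only [Set.mem_setOf_eq] at hω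
    rcases eq_or_lt_of_le hx with hx0 | hxpos
    · refine Set.mem_biUnion (Finset.mem_range.mpr hn) ?_
      constructor <;> simp [← hx0, hX0 ω, hY0 ω]
    · by_cases hXx : x ≤ X ω
      · refine Set.mem_biUnion (Finset.mem_range.mpr (Nat.sub_lt hn one_pos)) ?_
        constructor
        · have h1 : ((n-1:ℕ):ℝ) * x / n ≤ x := by
            rw [div_le_iff₀ hn']
            have : ((n-1:ℕ):ℝ) ≤ n := by exact_mod_cast Nat.sub_le n 1
            nlinarith
          exact le_trans h1 hXx
        · have : n - (n - 1) - 1 = 0 := by omega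
          simp [this, hY0 ω]
      · push_neg at hXx
        set i := ⌊(n : ℝ) * X ω / x⌋₊ with hi
        have hnn : 0 ≤ (n : ℝ) * X ω / x := div_nonneg (mul_nonneg hn'.le (hX0 ω)) hx
        have hiln : i < n := by
          apply Nat.floor_lt hnn |>.mpr
          rw [div_lt_iff₀ hxpos]
          nlinarith [hX0 ω]
        refine Set.mem_biUnion (Finset.mem_range.mpr hiln) ?_
        have h1 : (i:ℝ) ≤ (n : ℝ) * X ω / x := Nat.floor_le hnn
        have h2 : (n : ℝ) * X ω / x < i + 1 := Nat.lt_floor_add_one _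
        rw [div_lt_iff₀ hxpos] at h2
        rw [le_div_iff₀ hxpos] at h1
        constructor
        · show (i:ℝ) * x / n ≤ X ω
          rw [div_le_iff₀ hn']
          nlinarith
        · show ((n - i - 1 : ℕ):ℝ) * x / n ≤ Y ω
          have hc : ((n - i - 1 : ℕ):ℝ) = (n:ℝ) - i - 1 := by
            have : (1:ℕ) ≤ n - i := by omega
            push_cast [Nat.cast_sub hiln.le, Nat.cast_sub (by omega : 1 ≤ n - i)]
            ring
          rw [hc, div_le_iff₀ hn']
          nlinarith
  calc μ {ω | x < X ω + Y ω} ≤ μ (⋃ i ∈ Finset.range n, A i) := measure_mono hsub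
    _ ≤ ∑ i ∈ Finset.range n, μ (A i) := measure_biUnion_finset_le _ _
    _ = ∑ i ∈ Finset.range n,
        μ {ω | (i : ℝ) * x / n ≤ X ω} * μ {ω | ((n - i - 1 : ℕ) : ℝ) * x / n ≤ Y ω} :=
      Finset.sum_congr rfl fun i _ =>
        hindep.measure_inter_preimage_eq_mul _ _ measurableSet_Ici measurableSet_Ici
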